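/- Let n ≥ 1, let k = ⌊n/2⌋, and let A := {σ ∈ S_n : σ(i) > σ(n+1−i) for every integer i with 1 ≤ i and 2i ≤ n}. Then Σ_{σ∈A} sgn(σ) = k! if n is odd, and Σ_{σ∈A} sgn(σ) = (−1)^{n/2}·(n/2)! if n is even. -/
import Mathlib



open Equiv Equiv.Perm Finset

def padOne {k : ℕ} (e : Perm (Fin k)) : Perm (Fin (k + 1)) :=
  Equiv.Perm.decomposeFin.symm (0, e)

@[simp] lemma padOne_zero {k : ℕ} (e : Perm (Fin k)) : padOne e 0 = 0 :=
  Equiv.Perm.decomposeFin_symm_apply_zero 0 e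

@[simp] lemma padOne_succ {k : ℕ} (e : Perm (Fin k)) (x : Fin k) :
    padOne e x.succ = (e x).succ := by
  simp [padOne, Equiv.Perm.decomposeFin_symm_apply_succ]

@[simp] lemma sign_padOne {k : ℕ} (e : Perm (Fin k)) : sign (padOne e) = sign e := by
  simp [padOne, Equiv.Perm.decomposeFin.symm_sign]

def alpha {k : ℕ} (a : Fin (k + 1)) : Perm (Fin (k + 1)) := (Fin.cycleRange a)⁻¹

@[simp] lemma sign_alpha {k : ℕ} (a : Fin (k + 1)) : sign (alpha a) = (-1) ^ (a : ℕ) := by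
  simp [alpha, Fin.sign_cycleRange]

@[simp] lemma alpha_zero {k : ℕ} (a : Fin (k + 1)) : alpha a 0 = a := by
  rw [alpha, Perm.inv_def, Equiv.symm_apply_eq, Fin.cycleRange_self]

lemma coe_alpha_apply {k : ℕ} (a x : Fin (k + 1)) :
    ((alpha a x : Fin (k+1)) : ℕ) =
      if (x : ℕ) = 0 then (a : ℕ) else if (x : ℕ) ≤ (a : ℕ) then (x : ℕ) - 1 else (x : ℕ) := by
  rcases Nat.eq_zero_or_pos (x : ℕ) with hx | hx
  · have : x = 0 := Fin.ext hx
    subst this; simp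
  · rw [if_neg (by omega)]
    by_cases hxa : (x : ℕ) ≤ (a : ℕ)
    · rw [if_pos hxa]
      have hy : ((x : ℕ) - 1) < k + 1 := by have := x.isLt; omega
      have : alpha a x = ⟨(x : ℕ) - 1, hy⟩ := by
        rw [alpha, Perm.inv_def, Equiv.symm_apply_eq]
        have hlt : (⟨(x : ℕ) - 1, hy⟩ : Fin (k+1)) < a := by
          rw [Fin.lt_def]; simp; omega
        rw [Fin.cycleRange_of_lt hlt]
        apply Fin.ext
        rw [Fin.val_add_one_of_lt]
        · simp; omega
        · exact lt_of_lt_of_le hlt a.le_last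
      rw [this]
    · rw [if_neg hxa]
      have : alpha a x = x := by
        rw [alpha, Perm.inv_def, Equiv.symm_apply_eq]
        exact (Fin.cycleRange_of_gt (by rw [Fin.lt_def]; omega)).symm
      rw [this]

lemma sign_revConj {k : ℕ} (p : Perm (Fin k)) :
    sign (Fin.revPerm * p * Fin.revPerm) = sign p := by
  rw [map_mul, map_mul, mul_comm (sign (Fin.revPerm : Perm (Fin k))) (sign p), mul_assoc,
    Int.units_mul_self, mul_one]

def mu {k : ℕ} (c : Fin (k + 1)) : Perm (Fin (k + 1)) :=
  Fin.revPerm * (alpha c.rev) * Fin.revPerm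

@[simp] lemma mu_apply {k : ℕ} (c x : Fin (k + 1)) :
    mu c x = (alpha c.rev x.rev).rev := by
  simp [mu, Equiv.Perm.mul_apply]

@[simp] lemma sign_mu {k : ℕ} (c : Fin (k + 1)) : sign (mu c) = (-1) ^ ((c.rev : Fin (k+1)) : ℕ) := by
  rw [mu, sign_revConj, sign_alpha]

@[simp] lemma mu_last {k : ℕ} (c : Fin (k + 1)) : mu c (Fin.last k) = c := by
  simp [mu_apply, Fin.rev_last]

lemma coe_mu_castSucc {k : ℕ} (c : Fin (k + 1)) (y : Fin k) :
    ((mu c y.castSucc : Fin (k+1)) : ℕ) = if (y : ℕ) < (c : ℕ) then (y : ℕ) else (y : ℕ) + 1 := by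
  rw [mu_apply, Fin.val_rev, coe_alpha_apply]
  rw [Fin.val_rev, Fin.val_rev]
  have := y.isLt; have := c.isLt
  simp only [Fin.coe_castSucc]
  split_ifs <;> omega

def padLast {k : ℕ} (τ : Perm (Fin k)) : Perm (Fin (k + 1)) :=
  Fin.revPerm * padOne (Fin.revPerm * τ * Fin.revPerm) * Fin.revPerm

@[simp] lemma padLast_last {k : ℕ} (τ : Perm (Fin k)) : padLast τ (Fin.last k) = Fin.last k := by
  simp [padLast, Equiv.Perm.mul_apply, Fin.rev_last]

@[simp] lemma padLast_castSucc {k : ℕ} (τ : Perm (Fin k)) (y : Fin k) :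
    padLast τ y.castSucc = (τ y).castSucc := by
  simp only [padLast, Equiv.Perm.mul_apply, Fin.revPerm_apply, Fin.rev_castSucc, padOne_succ,
    Fin.rev_rev]
  conv_rhs => rw [← Fin.rev_rev ((τ y).castSucc), Fin.rev_castSucc]

@[simp] lemma sign_padLast {k : ℕ} (τ : Perm (Fin k)) : sign (padLast τ) = sign τ := by
  rw [padLast, sign_revConj, sign_padOne, sign_revConj]

def Psi {m : ℕ} (a : Fin (m + 2)) (c : Fin (m + 1)) (τ : Perm (Fin m)) : Perm (Fin (m + 2)) :=
  alpha a * padOne (mu c * padLast τ)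

@[simp] lemma Psi_zero {m : ℕ} (a : Fin (m + 2)) (c : Fin (m + 1)) (τ : Perm (Fin m)) :
    Psi a c τ 0 = a := by
  simp [Psi, Equiv.Perm.mul_apply]

lemma Psi_last {m : ℕ} (a : Fin (m + 2)) (c : Fin (m + 1)) (τ : Perm (Fin m)) :
    Psi a c τ (Fin.last (m + 1)) = alpha a c.succ := by
  rw [Psi, Equiv.Perm.mul_apply, ← Fin.succ_last, padOne_succ, Equiv.Perm.mul_apply,
    padLast_last, mu_last]

lemma Psi_middle {m : ℕ} (a : Fin (m + 2)) (c : Fin (m + 1)) (τ : Perm (Fin m)) (j : Fin m) :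
    Psi a c τ (j.castSucc.succ) = alpha a ((mu c (τ j).castSucc).succ) := by
  rw [Psi, Equiv.Perm.mul_apply, padOne_succ, Equiv.Perm.mul_apply, padLast_castSucc]

lemma sign_Psi {m : ℕ} (a : Fin (m + 2)) (c : Fin (m + 1)) (τ : Perm (Fin m)) :
    ((sign (Psi a c τ) : ℤˣ) : ℤ) = (-1) ^ ((a : ℕ) + ((c.rev : Fin (m+1)) : ℕ)) * ((sign τ : ℤˣ) : ℤ) := by
  rw [Psi, map_mul, sign_padOne, map_mul, sign_alpha, sign_mu, sign_padLast]
  push_cast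
  ring

-- the middle-composite function and its strict monotonicity
lemma gmono {m : ℕ} (a : Fin (m + 2)) (c : Fin (m + 1)) :
    StrictMono (fun y : Fin m => alpha a ((mu c y.castSucc).succ)) := by
  intro y y' h
  rw [Fin.lt_def] at h ⊢
  have h1 := coe_mu_castSucc c y
  have h2 := coe_mu_castSucc c y'
  have e1 := coe_alpha_apply a ((mu c y.castSucc).succ)
  have e2 := coe_alpha_apply a ((mu c y'.castSucc).succ)
  simp only [Fin.val_succ] at e1 e2
  rw [if_neg (Nat.succ_ne_zero _)] at e1 e2
  rw [h1] at e1
  rw [h2] at e2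
  rw [e1, e2]
  have := y.isLt; have := y'.isLt
  split_ifs <;> omega

lemma key0 {m : ℕ} (a : Fin (m + 2)) (c : Fin (m + 1)) :
    alpha a c.succ < a ↔ (c : ℕ) < (a : ℕ) := by
  rw [Fin.lt_def, coe_alpha_apply, Fin.val_succ, if_neg (Nat.succ_ne_zero _)]
  have := c.isLt
  split_ifs <;> omega

lemma Psi_injective {m : ℕ} :
    Function.Injective (fun p : (Fin (m + 2) × Fin (m + 1)) × Perm (Fin m) =>
      Psi p.1.1 p.1.2 p.2) := by
  rintro ⟨⟨a, c⟩, τ⟩ ⟨⟨a', c'⟩, τ'⟩ h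
  simp only at h
  have ha : a = a' := by rw [← Psi_zero a c τ, ← Psi_zero a' c' τ', h]
  subst ha
  have hlast := congrArg (fun σ : Perm (Fin (m+2)) => σ (Fin.last (m+1))) h
  simp only [Psi_last] at hlast
  have hc : c = c' := Fin.succ_injective _ ((alpha a).injective hlast)
  subst hc
  have hτ : τ = τ' := by
    apply Equiv.ext
    intro j
    have hm := congrArg (fun σ : Perm (Fin (m+2)) => σ (j.castSucc.succ)) h
    simp only [Psi_middle] at hm
    exact (gmono a c).injective hm
  rw [hτ]

lemma Psi_bijective {m : ℕ} :
    Function.Bijective (fun p : (Fin (m + 2) × Fin (m + 1)) × Perm (Fin m) =>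
      Psi p.1.1 p.1.2 p.2) := by
  rw [Fintype.bijective_iff_injective_and_card]
  refine ⟨Psi_injective, ?_⟩
  simp only [Fintype.card_prod, Fintype.card_perm, Fintype.card_fin]
  rw [Nat.factorial_succ, Nat.factorial_succ]
  ring

lemma cond_iff {m : ℕ} (a : Fin (m + 2)) (c : Fin (m + 1)) (τ : Perm (Fin m)) :
    (∀ i : Fin (m + 2), 2 * ((i : ℕ) + 1) ≤ m + 2 →
        Psi a c τ ⟨m + 2 - 1 - (i : ℕ), by have := i.isLt; omega⟩ < Psi a c τ i)
    ↔ ((c : ℕ) < (a : ℕ) ∧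
        ∀ j : Fin m, 2 * ((j : ℕ) + 1) ≤ m →
          τ ⟨m - 1 - (j : ℕ), by have := j.isLt; omega⟩ < τ j) := by
  constructor
  · intro h
    constructor
    · have h0 := h 0 (by simp)
      rw [show (⟨m + 2 - 1 - ((0 : Fin (m+2)) : ℕ), by have := (0 : Fin (m+2)).isLt; omega⟩ :
          Fin (m+2)) = Fin.last (m+1) from by ext; simp] at h0
      rw [Psi_last, Psi_zero] at h0
      exact (key0 a c).mp h0
    · intro j hj
      have hj1 : (j : ℕ) < m := j.isLt
      have hi := h (j.castSucc.succ) (by simp only [Fin.val_succ, Fin.coe_castSucc]; omega)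
      rw [show (⟨m + 2 - 1 - ((j.castSucc.succ : Fin (m+2)) : ℕ), by
            have := (j.castSucc.succ : Fin (m+2)).isLt; omega⟩ : Fin (m+2)) =
          ((⟨m - 1 - (j : ℕ), by omega⟩ : Fin m).castSucc.succ) from by
            ext; simp only [Fin.val_succ, Fin.coe_castSucc]; omega] at hi
      rw [Psi_middle, Psi_middle] at hi
      exact (gmono a c).lt_iff_lt.mp hi
  · rintro ⟨hca, hτ⟩ i hi
    rcases Fin.eq_zero_or_eq_succ i with rfl | ⟨j', rfl⟩
    · rw [show (⟨m + 2 - 1 - ((0 : Fin (m+2)) : ℕ), by have := (0 : Fin (m+2)).isLt; omega⟩ :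
          Fin (m+2)) = Fin.last (m+1) from by ext; simp]
      rw [Psi_last, Psi_zero]
      exact (key0 a c).mpr hca
    · have hj' : (j' : ℕ) < m := by
        simp only [Fin.val_succ] at hi; have := j'.isLt; omega
      have hig : 2 * ((j' : ℕ) + 1) ≤ m := by simp only [Fin.val_succ] at hi; omega
      have hcs : j'.succ = ((⟨(j' : ℕ), hj'⟩ : Fin m).castSucc.succ) := by
        ext; simp
      rw [show (⟨m + 2 - 1 - ((j'.succ : Fin (m+2)) : ℕ), by
            have := (j'.succ : Fin (m+2)).isLt; omega⟩ : Fin (m+2)) =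
          ((⟨m - 1 - (j' : ℕ), by omega⟩ : Fin m).castSucc.succ) from by
            ext; simp only [Fin.val_succ, Fin.coe_castSucc]; omega]
      rw [hcs, Psi_middle, Psi_middle]
      apply (gmono a c).lt_iff_lt.mpr
      have := hτ ⟨(j' : ℕ), hj'⟩ (by simpa using hig)
      convert this using 2

def F (k : ℕ) : ℤ :=
  ∑ σ ∈ Finset.univ.filter (fun σ : Equiv.Perm (Fin k) =>
      ∀ i : Fin k, 2 * ((i : ℕ) + 1) ≤ k →
        σ ⟨k - 1 - (i : ℕ), by have := i.isLt; omega⟩ < σ i),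
    (Equiv.Perm.sign σ : ℤ)

lemma negpow_congr {p q : ℕ} (h : p % 2 = q % 2) : ((-1 : ℤ)) ^ p = (-1) ^ q := by
  conv_lhs => rw [← Nat.div_add_mod p 2]
  conv_rhs => rw [← Nat.div_add_mod q 2]
  rw [pow_add, pow_add, pow_mul, pow_mul, h]
  norm_num

lemma count_odd (t : ℕ) (x : ℤ) :
    ∑ a ∈ Finset.range t, (if a % 2 = 1 then x else 0) = ((t / 2 : ℕ) : ℤ) * x := by
  induction t with
  | zero => simp
  | succ t ih =>
    rw [Finset.sum_range_succ, ih]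
    by_cases h : t % 2 = 1
    · rw [if_pos h, show (t + 1) / 2 = t / 2 + 1 by omega]
      push_cast; ring
    · rw [if_neg h, show (t + 1) / 2 = t / 2 by omega, add_zero]

lemma innerSumLem (m a : ℕ) (ha : a ≤ m + 1) :
    ∑ c ∈ Finset.range (m + 1), (if c < a then ((-1 : ℤ)) ^ (a + (m - c)) else 0)
      = if a % 2 = 1 then (-1 : ℤ) ^ (m + 1) else 0 := by
  have step1 : ∀ c ∈ Finset.range (m + 1),
      (if c < a then ((-1 : ℤ)) ^ (a + (m - c)) else 0)
        = (if c < a then ((-1 : ℤ)) ^ (a + m + c) else 0) := by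
    intro c hc; rw [Finset.mem_range] at hc
    by_cases h : c < a
    · rw [if_pos h, if_pos h,
        negpow_congr (p := a + (m - c)) (q := a + m + c) (by omega)]
    · rw [if_neg h, if_neg h]
  rw [Finset.sum_congr rfl step1, ← Finset.sum_filter]
  rw [show (Finset.range (m + 1)).filter (fun c => c < a) = Finset.range a from by
    ext c; simp only [Finset.mem_filter, Finset.mem_range]; omega]
  have hsplit : ∀ c : ℕ, ((-1 : ℤ)) ^ (a + m + c) = (-1) ^ (a + m) * (-1) ^ c :=
    fun c => pow_add _ _ _
  simp only [hsplit]
  rw [← Finset.mul_sum, neg_one_geom_sum]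
  by_cases h : a % 2 = 1
  · rw [if_pos h, if_neg (by rw [Nat.even_iff]; omega), mul_one]
    exact negpow_congr (by omega)
  · rw [if_neg h, if_pos (by rw [Nat.even_iff]; omega), mul_zero]

lemma Csum (m : ℕ) :
    ∑ a ∈ Finset.range (m + 2), ∑ c ∈ Finset.range (m + 1),
        (if c < a then ((-1 : ℤ)) ^ (a + (m - c)) else 0)
      = (-1 : ℤ) ^ (m + 1) * (((m + 2) / 2 : ℕ) : ℤ) := by
  have h1 : (∑ a ∈ Finset.range (m + 2), ∑ c ∈ Finset.range (m + 1),
        (if c < a then ((-1 : ℤ)) ^ (a + (m - c)) else 0))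
      = ∑ a ∈ Finset.range (m + 2), (if a % 2 = 1 then (-1 : ℤ) ^ (m + 1) else 0) :=
    Finset.sum_congr rfl (fun a ha => innerSumLem m a (by
      rw [Finset.mem_range] at ha; omega))
  rw [h1, count_odd, mul_comm]



lemma sum_mul_split {α β : Type*} [Fintype α] [Fintype β] (u : α → ℤ) (w : β → ℤ) :
    (∑ p : α × β, u p.1 * w p.2) = (∑ a : α, u a) * (∑ b : β, w b) := by
  calc (∑ p : α × β, u p.1 * w p.2)
      = ∑ a : α, ∑ b : β, u a * w b := by
        rw [← Finset.univ_product_univ, Finset.sum_product]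
    _ = (∑ a : α, u a) * (∑ b : β, w b) := (Finset.sum_mul_sum _ _ _ _).symm

lemma F_step (m : ℕ) : F (m + 2) = (-1 : ℤ) ^ (m + 1) * (((m + 2) / 2 : ℕ) : ℤ) * F m := by
  have pointwise : ∀ p : (Fin (m + 2) × Fin (m + 1)) × Perm (Fin m),
      ((fun ac : Fin (m + 2) × Fin (m + 1) =>
          if (ac.2 : ℕ) < (ac.1 : ℕ) then
            ((-1 : ℤ)) ^ ((ac.1 : ℕ) + (m - (ac.2 : ℕ))) else 0) p.1 *
       (fun τ : Perm (Fin m) =>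
          if (∀ j : Fin m, 2 * ((j : ℕ) + 1) ≤ m →
              τ ⟨m - 1 - (j : ℕ), by have := j.isLt; omega⟩ < τ j) then
            ((Perm.sign τ : ℤˣ) : ℤ) else 0) p.2)
      = (fun σ : Perm (Fin (m + 2)) =>
          if (∀ i : Fin (m + 2), 2 * ((i : ℕ) + 1) ≤ m + 2 →
              σ ⟨m + 2 - 1 - (i : ℕ), by have := i.isLt; omega⟩ < σ i) then
            ((Perm.sign σ : ℤˣ) : ℤ) else 0) (Psi p.1.1 p.1.2 p.2) := by
    rintro ⟨⟨a, c⟩, τ⟩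
    simp only
    have hrev : ((c.rev : Fin (m + 1)) : ℕ) = m - (c : ℕ) := by
      rw [Fin.val_rev]; omega
    by_cases h1 : (c : ℕ) < (a : ℕ)
    · by_cases h2 : (∀ j : Fin m, 2 * ((j : ℕ) + 1) ≤ m →
          τ ⟨m - 1 - (j : ℕ), by have := j.isLt; omega⟩ < τ j)
      · rw [if_pos h1, if_pos h2, if_pos ((cond_iff a c τ).mpr ⟨h1, h2⟩), sign_Psi, hrev]
      · rw [if_pos h1, if_neg h2, mul_zero,
          if_neg (fun hh => h2 ((cond_iff a c τ).mp hh).2)]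
    · rw [if_neg h1, zero_mul, if_neg (fun hh => h1 ((cond_iff a c τ).mp hh).1)]
  have reindex := Fintype.sum_bijective
    (fun p : (Fin (m + 2) × Fin (m + 1)) × Perm (Fin m) => Psi p.1.1 p.1.2 p.2)
    Psi_bijective
    (fun p : (Fin (m + 2) × Fin (m + 1)) × Perm (Fin m) =>
      (fun ac : Fin (m + 2) × Fin (m + 1) =>
          if (ac.2 : ℕ) < (ac.1 : ℕ) then
            ((-1 : ℤ)) ^ ((ac.1 : ℕ) + (m - (ac.2 : ℕ))) else 0) p.1 *
      (fun τ : Perm (Fin m) =>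
          if (∀ j : Fin m, 2 * ((j : ℕ) + 1) ≤ m →
              τ ⟨m - 1 - (j : ℕ), by have := j.isLt; omega⟩ < τ j) then
            ((Perm.sign τ : ℤˣ) : ℤ) else 0) p.2)
    (fun σ : Perm (Fin (m + 2)) =>
          if (∀ i : Fin (m + 2), 2 * ((i : ℕ) + 1) ≤ m + 2 →
              σ ⟨m + 2 - 1 - (i : ℕ), by have := i.isLt; omega⟩ < σ i) then
            ((Perm.sign σ : ℤˣ) : ℤ) else 0)
    pointwise
  have hF2 : F (m + 2) = ∑ σ : Perm (Fin (m + 2)),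
      (fun σ : Perm (Fin (m + 2)) =>
          if (∀ i : Fin (m + 2), 2 * ((i : ℕ) + 1) ≤ m + 2 →
              σ ⟨m + 2 - 1 - (i : ℕ), by have := i.isLt; omega⟩ < σ i) then
            ((Perm.sign σ : ℤˣ) : ℤ) else 0) σ := by
    unfold F
    exact Finset.sum_filter _ _
  have hFm : F m = ∑ τ : Perm (Fin m),
      (fun τ : Perm (Fin m) =>
          if (∀ j : Fin m, 2 * ((j : ℕ) + 1) ≤ m →
              τ ⟨m - 1 - (j : ℕ), by have := j.isLt; omega⟩ < τ j) then
            ((Perm.sign τ : ℤˣ) : ℤ) else 0) τ := by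
    unfold F
    exact Finset.sum_filter _ _
  rw [hF2, ← reindex]
  beta_reduce
  rw [sum_mul_split (fun ac : Fin (m + 2) × Fin (m + 1) =>
        if (ac.2 : ℕ) < (ac.1 : ℕ) then
          ((-1 : ℤ)) ^ ((ac.1 : ℕ) + (m - (ac.2 : ℕ))) else 0)
      (fun τ : Perm (Fin m) =>
        if (∀ j : Fin m, 2 * ((j : ℕ) + 1) ≤ m →
            τ ⟨m - 1 - (j : ℕ), by have := j.isLt; omega⟩ < τ j) then
          ((Perm.sign τ : ℤˣ) : ℤ) else 0)]
  rw [← hFm]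
  congr 1
  have conv1 : (∑ ac : Fin (m + 2) × Fin (m + 1),
      (fun ac : Fin (m + 2) × Fin (m + 1) =>
        if (ac.2 : ℕ) < (ac.1 : ℕ) then
          ((-1 : ℤ)) ^ ((ac.1 : ℕ) + (m - (ac.2 : ℕ))) else 0) ac)
      = ∑ a : Fin (m + 2), ∑ c : Fin (m + 1),
          (if (c : ℕ) < (a : ℕ) then
            ((-1 : ℤ)) ^ ((a : ℕ) + (m - (c : ℕ))) else 0) := by
    rw [← Finset.univ_product_univ, Finset.sum_product]
  rw [conv1]
  rw [Fin.sum_univ_eq_sum_range (fun a => ∑ c : Fin (m + 1),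
    if (c : ℕ) < a then ((-1 : ℤ)) ^ (a + (m - (c : ℕ))) else 0) (m + 2)]
  rw [Finset.sum_congr rfl (fun a _ => Fin.sum_univ_eq_sum_range
    (fun c => if c < a then ((-1 : ℤ)) ^ (a + (m - c)) else 0) (m + 1))]
  exact Csum m

lemma F_base0 : F 0 = 1 := by decide

lemma F_base1 : F 1 = 1 := by decide

lemma target_step (r : ℕ) :
    (-1 : ℤ) ^ (r + 1) * (((r + 2) / 2 : ℕ) : ℤ) *
      (if r % 2 = 1 then ((r / 2).factorial : ℤ)
        else (-1) ^ (r / 2) * ((r / 2).factorial : ℤ))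
    = if (r + 2) % 2 = 1 then (((r + 2) / 2).factorial : ℤ)
      else (-1) ^ ((r + 2) / 2) * (((r + 2) / 2).factorial : ℤ) := by
  have h2 : (r + 2) / 2 = r / 2 + 1 := by omega
  by_cases h : r % 2 = 1
  · rw [if_pos h, if_pos (by omega)]
    have hpow : (-1 : ℤ) ^ (r + 1) = 1 := Even.neg_one_pow (by rw [Nat.even_iff]; omega)
    rw [h2, hpow, Nat.factorial_succ]
    push_cast
    ring
  · rw [if_neg h, if_neg (by omega)]
    have hpow : (-1 : ℤ) ^ (r + 1) = -1 := Odd.neg_one_pow (by rw [Nat.odd_iff]; omega)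
    rw [h2, hpow, Nat.factorial_succ, pow_succ]
    push_cast
    ring

lemma F_formula : ∀ n : ℕ, F n =
    if n % 2 = 1 then ((n / 2).factorial : ℤ)
    else (-1) ^ (n / 2) * ((n / 2).factorial : ℤ) := by
  intro n
  induction n using Nat.strong_induction_on with
  | _ n ih =>
    rcases n with _ | _ | m
    · norm_num [F_base0]
    · norm_num [F_base1]
    · show F (m + 2) = if (m + 2) % 2 = 1 then (((m + 2) / 2).factorial : ℤ)
        else (-1) ^ ((m + 2) / 2) * (((m + 2) / 2).factorial : ℤ)
      rw [F_step m, ih m (by omega)]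
      exact target_step m


/-- The signed count of permutations `σ ∈ S_n` with `σ(i) > σ(n+1−i)` for all
`1 ≤ i` with `2i ≤ n` equals `⌊n/2⌋!` for odd `n`, and `(−1)^{n/2}·(n/2)!`
for even `n`.  (Positions are `1`-indexed; here `i` runs over `Fin n`, with
`i+1` the corresponding `1`-indexed position.) -/
theorem signed_count_lemQ (n : ℕ) (hn : 1 ≤ n) :
    (∑ σ ∈ Finset.univ.filter (fun σ : Equiv.Perm (Fin n) =>
        ∀ i : Fin n, 2 * ((i : ℕ) + 1) ≤ n →
          σ ⟨n - 1 - (i : ℕ), by omega⟩ < σ i),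
      (Equiv.Perm.sign σ : ℤ)) =
    if n % 2 = 1 then ((n / 2).factorial : ℤ)
    else (-1) ^ (n / 2) * ((n / 2).factorial : ℤ) := by
  exact F_formula n
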